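/- For a stochastic matrix P on E = {1,...,N}, letting L index all N^N functions β_ℓ : E → E and setting p_ℓ = P_{1,β_ℓ(1)} · P_{2,β_ℓ(2)} ⋯ P_{N,β_ℓ(N)}, the weights p_ℓ are nonnegative, sum to 1, and P = ∑_{ℓ∈L} p_ℓ D_ℓ, where D_ℓ is the deterministic matrix (D_ℓ)_{ij} = δ_{β_ℓ(i),j}. -/

import Mathlib

/-- For a stochastic matrix `P` on `E = {1,...,N}` (`N ≥ 1`), the Davis weights
`p β = ∏ i, P i (β i)` over all `N^N` maps `β : E → E` are nonnegative, sum to one, and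
`P = ∑ β, p β • D β` where `D β` is the deterministic matrix of `β`. -/
theorem davis_decomposition_with_product_weights
    {N : ℕ} (hN : 1 ≤ N) (P : Matrix (Fin N) (Fin N) ℝ)
    (hpos : ∀ i j, 0 ≤ P i j) (hrow : ∀ i, ∑ j, P i j = 1) :
    (∀ β : Fin N → Fin N, 0 ≤ ∏ i, P i (β i)) ∧
    (∑ β : Fin N → Fin N, ∏ i, P i (β i)) = 1 ∧
    P = ∑ β : Fin N → Fin N,
      (∏ i, P i (β i)) • (Matrix.of fun i j => if β i = j then (1 : ℝ) else 0) := by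
  refine ⟨fun β => Finset.prod_nonneg fun i _ => hpos i (β i), ?_, ?_⟩
  · have key0 := Finset.prod_univ_sum (fun _ : Fin N => (Finset.univ : Finset (Fin N)))
      (fun k y => P k y)
    rw [Fintype.piFinset_univ] at key0
    exact key0.symm.trans (by simp [hrow])
  · ext i j
    rw [Matrix.sum_apply]
    have h : ∀ β : Fin N → Fin N,
        ((∏ k, P k (β k)) • (Matrix.of fun i j => if β i = j then (1 : ℝ) else 0)) i j
        = ∏ k, (P k (β k) * if k = i then (if β k = j then (1:ℝ) else 0) else 1) := by
      intro β
      simp only [Matrix.smul_apply, Matrix.of_apply, smul_eq_mul, Finset.prod_mul_distrib]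
      rw [Finset.prod_ite_eq' Finset.univ i (fun k => if β k = j then (1:ℝ) else 0)]
      simp [mul_comm]
    simp only [h]
    have key := Finset.prod_univ_sum (fun _ : Fin N => (Finset.univ : Finset (Fin N)))
      (fun k y => P k y * if k = i then (if y = j then (1:ℝ) else 0) else 1)
    rw [Fintype.piFinset_univ] at key
    rw [← key]
    have h2 : ∀ k : Fin N,
        (∑ x, P k x * if k = i then (if x = j then (1:ℝ) else 0) else 1)
        = if k = i then P i j else 1 := by
      intro k
      by_cases hk : k = i
      · subst hk; simp [mul_ite]
      · simp [hk, hrow k]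
    simp only [h2]
    simp
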